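/- Let E = F_{q^n} and h(x) ∈ F_{q^d}[x] a monic irreducible divisor of x^{n'/d} - 1 (where d | n' and n = p^a n', p ∤ n'). Let Γ be the group of additive characters χ of E whose F_{q^d}[x]-order divides h(x). Then for w ∈ E, the quantity (1/q^{d·deg h}) · [(q^{d·deg h}) · χ_0(w) − Σ_{χ ∈ Γ} χ(w)] equals 1 if h(x)^{p^a} divides the q^d-order of w, and 0 otherwise. -/

import Mathlib

open Polynomial
open scoped Classical

noncomputable section

/-- The action of a polynomial `g ∈ F[x]` on `z ∈ E` through `x ↦ σ`, where
`σ : z ↦ z^Q` is the `Q`-power Frobenius (`Q = |F|`): `g(σ)(z) = Σᵢ aᵢ • z^{Q^i}`. -/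
def polyAct {F E : Type*} [CommSemiring F] [CommRing E] [Algebra F E]
    (Q : ℕ) (g : F[X]) (z : E) : E :=
  g.sum fun i a => a • z ^ Q ^ i

namespace Stmt8Aux

variable {F E : Type*} [Field F] [Fintype F] [Field E] [Fintype E] [Algebra F E]
  (p : ℕ) [Fact p.Prime] [CharP E p]

/-- The relative Frobenius `z ↦ z^{|F|}` as an `F`-linear endomorphism of `E`. -/
def frobL : E →ₗ[F] E where
  toFun z := z ^ Fintype.card F
  map_add' x y := by
    have : CharP F p := (Algebra.charP_iff F E p).mpr ‹_›
    obtain ⟨r, hp, hr⟩ := FiniteField.card F p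
    show (x + y) ^ Fintype.card F = x ^ Fintype.card F + y ^ Fintype.card F
    rw [hr, add_pow_char_pow]
  map_smul' a z := by
    simp only [RingHom.id_apply, Algebra.smul_def, mul_pow, ← map_pow, FiniteField.pow_card]

lemma frobL_pow_apply (i : ℕ) (z : E) :
    ((frobL p (F := F) (E := E)) ^ i) z = z ^ (Fintype.card F) ^ i := by
  induction i with
  | zero => simp
  | succ n ih =>
      rw [pow_succ', Module.End.mul_apply, ih]
      show (z ^ Fintype.card F ^ n) ^ Fintype.card F = _
      rw [← pow_mul, ← pow_succ]

lemma polyAct_eq_aeval (g : F[X]) (z : E) :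
    polyAct (Fintype.card F) g z = Polynomial.aeval (frobL p (F := F) (E := E)) g z := by
  induction g using Polynomial.induction_on' with
  | add f g hf hg =>
      have : polyAct (Fintype.card F) (f + g) z
          = polyAct (Fintype.card F) f z + polyAct (Fintype.card F) g z := by
        unfold polyAct
        exact Polynomial.sum_add_index f g _ (fun i => zero_smul F _)
          (fun i a b => add_smul a b _)
      rw [this, hf, hg, map_add, LinearMap.add_apply]
  | monomial n a =>
      unfold polyAct
      rw [Polynomial.sum_monomial_index a _ (zero_smul F _), Polynomial.aeval_monomial,
        Module.End.mul_apply, frobL_pow_apply, Module.algebraMap_end_apply]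

/-- The action of `g` as an additive monoid homomorphism `E →+ E`. -/
def actHom (g : F[X]) : E →+ E :=
  (Polynomial.aeval (frobL p (F := F) (E := E)) g).toAddMonoidHom

lemma actHom_apply (g : F[X]) (z : E) :
    actHom p g z = polyAct (Fintype.card F) g z := (polyAct_eq_aeval p g z).symm

include p in
lemma polyAct_mul (g₁ g₂ : F[X]) (z : E) :
    polyAct (Fintype.card F) (g₁ * g₂) z
      = polyAct (Fintype.card F) g₁ (polyAct (Fintype.card F) g₂ z) := by
  simp only [polyAct_eq_aeval p, map_mul, Module.End.mul_apply]

include p in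
lemma polyAct_zero_right (g : F[X]) : polyAct (Fintype.card F) g (0 : E) = 0 := by
  rw [polyAct_eq_aeval p, map_zero]

/-- Cardinality bound on the kernel of the action of a nonzero polynomial. -/
lemma card_ker_le (g : F[X]) (hg : g ≠ 0) :
    Nat.card (actHom p (F := F) (E := E) g).ker ≤ Fintype.card F ^ g.natDegree := by
  classical
  set Q := Fintype.card F with hQ
  have hQ2 : 2 ≤ Q := Fintype.one_lt_card
  set P : E[X] := ∑ i ∈ g.support, C (algebraMap F E (g.coeff i)) * X ^ (Q ^ i) with hP
  have hev : ∀ z : E, P.eval z = polyAct Q g z := by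
    intro z
    rw [hP, Polynomial.eval_finset_sum]
    unfold polyAct
    rw [Polynomial.sum]
    refine Finset.sum_congr rfl fun i _ => ?_
    rw [Polynomial.eval_mul, Polynomial.eval_C, Polynomial.eval_pow, Polynomial.eval_X,
      Algebra.smul_def]
  have hcoeff : P.coeff (Q ^ g.natDegree) = algebraMap F E (g.coeff g.natDegree) := by
    rw [hP, Polynomial.finset_sum_coeff]
    have : ∀ i ∈ g.support,
        (C (algebraMap F E (g.coeff i)) * X ^ (Q ^ i)).coeff (Q ^ g.natDegree)
          = if i = g.natDegree then algebraMap F E (g.coeff i) else 0 := by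
      intro i _
      rw [Polynomial.coeff_C_mul, Polynomial.coeff_X_pow]
      have heqv : (Q ^ g.natDegree = Q ^ i) ↔ (i = g.natDegree) := by
        constructor
        · intro hh; exact (Nat.pow_right_injective hQ2 hh).symm
        · intro hh; rw [hh]
      simp only [mul_ite, mul_one, mul_zero]
      rw [if_congr heqv rfl rfl]
    rw [Finset.sum_congr rfl this, Finset.sum_ite_eq' g.support g.natDegree,
      if_pos (Polynomial.natDegree_mem_support_of_nonzero hg)]
  have hP0 : P ≠ 0 := by
    intro hc
    rw [hc, Polynomial.coeff_zero] at hcoeff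
    exact Polynomial.leadingCoeff_ne_zero.mpr hg
      ((_root_.map_eq_zero (algebraMap F E)).mp hcoeff.symm)
  have hdeg : P.natDegree ≤ Q ^ g.natDegree := by
    rw [hP]
    refine Polynomial.natDegree_sum_le_of_forall_le _ _ fun i hi => ?_
    refine le_trans (Polynomial.natDegree_C_mul_le _ _) ?_
    rw [Polynomial.natDegree_X_pow]
    exact Nat.pow_le_pow_right (by omega) (Polynomial.le_natDegree_of_mem_supp i hi)
  -- kernel is contained in the root set of P
  have hsub : ((actHom p (F := F) (E := E) g).ker : Set E) ⊆ ↑P.roots.toFinset := by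
    intro z hz
    simp only [SetLike.mem_coe, AddMonoidHom.mem_ker] at hz
    rw [actHom_apply, ← hev] at hz
    simp only [Finset.coe_sort_coe, Multiset.mem_toFinset, Finset.mem_coe]
    exact Polynomial.mem_roots'.mpr ⟨hP0, hz⟩
  calc Nat.card (actHom p (F := F) (E := E) g).ker
      = ((actHom p (F := F) (E := E) g).ker : Set E).ncard := Nat.card_coe_set_eq _
    _ ≤ (↑P.roots.toFinset : Set E).ncard := Set.ncard_le_ncard hsub (Set.toFinite _)
    _ = P.roots.toFinset.card := Set.ncard_coe_finset _
    _ ≤ Multiset.card P.roots := Multiset.toFinset_card_le _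
    _ ≤ P.natDegree := Polynomial.card_roots' P
    _ ≤ Q ^ g.natDegree := hdeg

lemma card_ker_mul_card_range (T : E →+ E) :
    Nat.card T.ker * Nat.card T.range = Fintype.card E := by
  have h1 := AddSubgroup.card_eq_card_quotient_mul_card_addSubgroup T.ker
  have h2 : Nat.card (E ⧸ T.ker) = Nat.card T.range :=
    Nat.card_congr (QuotientAddGroup.quotientKerEquivRange T).toEquiv
  rw [h2] at h1
  rw [Nat.card_eq_fintype_card, Nat.mul_comm] at h1
  exact h1.symm

variable (N : ℕ)

include p in
lemma polyAct_XN_sub_one (hcard : Fintype.card E = Fintype.card F ^ N) (z : E) :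
    polyAct (Fintype.card F) ((X : F[X]) ^ N - 1) z = 0 := by
  rw [polyAct_eq_aeval p, map_sub, map_one, map_pow, Polynomial.aeval_X,
    LinearMap.sub_apply, Module.End.one_apply, frobL_pow_apply, ← hcard,
    FiniteField.pow_card, sub_self]

/-- For a factorization `u * v = X^N - 1`, the kernel of `u(σ)` equals the range of `v(σ)`,
and has cardinality `Q^{deg u}`. -/
lemma ker_eq_range (hcard : Fintype.card E = Fintype.card F ^ N) (hN0 : 0 < N)
    (u v : F[X]) (huv : u * v = X ^ N - 1) :
    (actHom p (F := F) (E := E) u).ker = (actHom p (F := F) (E := E) v).range ∧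
      Nat.card (actHom p (F := F) (E := E) u).ker = Fintype.card F ^ u.natDegree := by
  classical
  set Q := Fintype.card F with hQdef
  have hQ1 : 1 ≤ Q := Fintype.card_pos
  have hXN : ((X : F[X]) ^ N - 1) ≠ 0 := by
    have : ((X : F[X]) ^ N - C 1).Monic := Polynomial.monic_X_pow_sub_C 1 hN0.ne'
    simpa using this.ne_zero
  have hu0 : u ≠ 0 := fun hc => hXN (by rw [← huv, hc, zero_mul])
  have hv0 : v ≠ 0 := fun hc => hXN (by rw [← huv, hc, mul_zero])
  have hdeg : u.natDegree + v.natDegree = N := by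
    have := Polynomial.natDegree_mul hu0 hv0
    rw [huv] at this
    have h2 : ((X : F[X]) ^ N - 1).natDegree = N := by
      simpa using (Polynomial.natDegree_X_pow_sub_C (R := F) (n := N) (r := 1))
    omega
  have hle : (actHom p (F := F) (E := E) v).range ≤ (actHom p (F := F) (E := E) u).ker := by
    rintro _ ⟨z, rfl⟩
    simp only [AddMonoidHom.mem_ker]
    rw [actHom_apply, actHom_apply, ← polyAct_mul p, huv, polyAct_XN_sub_one p N hcard]
  set ku := Nat.card (actHom p (F := F) (E := E) u).ker with hku
  set kv := Nat.card (actHom p (F := F) (E := E) v).ker with hkv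
  set rv := Nat.card (actHom p (F := F) (E := E) v).range with hrv
  have hbu : ku ≤ Q ^ u.natDegree := card_ker_le p u hu0
  have hbv : kv ≤ Q ^ v.natDegree := card_ker_le p v hv0
  have hprod : kv * rv = Q ^ N := by
    rw [hkv, hrv, card_ker_mul_card_range, hcard]
  have hrvle : rv ≤ ku := AddSubgroup.card_le_of_le hle
  have hQN : Q ^ N = Q ^ u.natDegree * Q ^ v.natDegree := by
    rw [← pow_add, hdeg]
  have hkvpos : 0 < kv := Nat.card_pos
  have hrvpos : 0 < rv := Nat.card_pos
  have hupos : 0 < Q ^ u.natDegree := Nat.pow_pos hQ1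
  have hvpos : 0 < Q ^ v.natDegree := Nat.pow_pos hQ1
  -- force equalities
  have key : Q ^ u.natDegree * Q ^ v.natDegree ≤ ku * Q ^ v.natDegree := by
    calc Q ^ u.natDegree * Q ^ v.natDegree = Q ^ N := hQN.symm
      _ = kv * rv := hprod.symm
      _ ≤ Q ^ v.natDegree * ku := Nat.mul_le_mul hbv hrvle
      _ = ku * Q ^ v.natDegree := Nat.mul_comm _ _
  have hkueq : ku = Q ^ u.natDegree :=
    le_antisymm hbu (Nat.le_of_mul_le_mul_right key hvpos)
  have key2 : Q ^ u.natDegree * Q ^ v.natDegree ≤ rv * Q ^ v.natDegree := by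
    calc Q ^ u.natDegree * Q ^ v.natDegree = Q ^ N := hQN.symm
      _ = kv * rv := hprod.symm
      _ ≤ Q ^ v.natDegree * rv := Nat.mul_le_mul_right rv hbv
      _ = rv * Q ^ v.natDegree := Nat.mul_comm _ _
  have hrvge : Q ^ u.natDegree ≤ rv := Nat.le_of_mul_le_mul_right key2 hvpos
  refine ⟨le_antisymm ?_ hle, hkueq⟩
  have hcc : Nat.card (actHom p (F := F) (E := E) u).ker
      ≤ Nat.card (actHom p (F := F) (E := E) v).range := by omega
  intro x hx
  have heq := AddSubgroup.eq_of_le_of_card_ge hle hcc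
  rw [← heq] at hx
  exact hx

section Char

/-- The characters trivial on a subgroup `M` are exactly the characters coming from `E ⧸ M`. -/
lemma gamma_eq_range (M : AddSubgroup E) :
    {χ : AddChar E ℂ | ∀ y ∈ M, χ y = 1}
      = Set.range (fun ψ : AddChar (E ⧸ M) ℂ =>
          ψ.compAddMonoidHom (QuotientAddGroup.mk' M)) := by
  ext χ
  constructor
  · intro hχ
    have hker : M ≤ (AddChar.toAddMonoidHomEquiv χ).ker := by
      intro y hy
      simp only [AddMonoidHom.mem_ker, AddChar.toAddMonoidHomEquiv_apply]
      rw [hχ y hy]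
      rfl
    refine ⟨AddChar.toAddMonoidHomEquiv.symm
      (QuotientAddGroup.lift M (AddChar.toAddMonoidHomEquiv χ) hker), ?_⟩
    ext x
    simp only [AddChar.compAddMonoidHom_apply, QuotientAddGroup.mk'_apply,
      AddChar.toAddMonoidHomEquiv_symm_apply]
    rw [QuotientAddGroup.lift_mk']
    rfl
  · rintro ⟨ψ, rfl⟩
    intro y hy
    simp only [AddChar.compAddMonoidHom_apply, QuotientAddGroup.mk'_apply]
    rw [(QuotientAddGroup.eq_zero_iff y).mpr hy, AddChar.map_zero_eq_one]

lemma finsum_gamma (M : AddSubgroup E) (w : E) :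
    ∑ᶠ χ ∈ {χ : AddChar E ℂ | ∀ y ∈ M, χ y = 1}, (χ w : ℂ)
      = if w ∈ M then (Nat.card (E ⧸ M) : ℂ) else 0 := by
  classical
  rw [gamma_eq_range,
    finsum_mem_range (AddChar.compAddMonoidHom_injective_left _
      (QuotientAddGroup.mk'_surjective M)),
    finsum_eq_sum_of_fintype]
  have : ∀ ψ : AddChar (E ⧸ M) ℂ,
      (ψ.compAddMonoidHom (QuotientAddGroup.mk' M)) w = ψ ((w : E ⧸ M)) := fun ψ => rfl
  rw [Finset.sum_congr rfl fun ψ _ => this ψ, AddChar.sum_apply_eq_ite]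
  rw [Nat.card_eq_fintype_card]
  congr 1
  · rw [eq_iff_iff]
    exact QuotientAddGroup.eq_zero_iff w

end Char

end Stmt8Aux

open Stmt8Aux in
theorem stmt_8 (F E : Type*) [Field F] [Fintype F] [Field E] [Fintype E]
    [Algebra F E] (p : ℕ) [Fact p.Prime] [CharP E p]
    (a m : ℕ) (hm : ¬ p ∣ m) (hm0 : 0 < m)
    (hcard : Fintype.card E = Fintype.card F ^ (m * p ^ a))
    (h : F[X]) (hmonic : h.Monic) (hirr : Irreducible h)
    (hdvd : h ∣ X ^ m - 1)
    (Γ : Set (AddChar E ℂ))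
    (hΓ : Γ = {χ : AddChar E ℂ | ∀ z : E, χ (polyAct (Fintype.card F) h z) = 1}) :
    ∀ w : E,
      ((Fintype.card F : ℂ) ^ h.natDegree)⁻¹ *
          ((Fintype.card F : ℂ) ^ h.natDegree - ∑ᶠ χ ∈ Γ, χ w)
        = if (∀ g : F[X], g ≠ 0 → polyAct (Fintype.card F) g w = 0 → h ^ p ^ a ∣ g)
          then 1 else 0 := by
  classical
  intro w
  set Q := Fintype.card F with hQdef
  have hQ1 : 1 ≤ Q := Fintype.card_pos
  have hFp : CharP F p := (Algebra.charP_iff F E p).mpr ‹_›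
  set N := m * p ^ a with hN
  have hN0 : 0 < N := Nat.mul_pos hm0 (Nat.pow_pos (Nat.Prime.pos Fact.out))
  -- X^N - 1 = (X^m - 1)^(p^a)
  have hXN : ((X : F[X]) ^ m - 1) ^ p ^ a = (X : F[X]) ^ N - 1 := by
    rw [sub_pow_char_pow, ← pow_mul, one_pow, hN]
  -- basic facts about h
  have hh0 : h ≠ 0 := hirr.ne_zero
  have hhd : h ∣ (X : F[X]) ^ N - 1 := by
    rw [← hXN]
    exact dvd_pow hdvd (Nat.pos_iff_ne_zero.mp (Nat.one_le_pow a p (Nat.Prime.pos Fact.out)))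
  -- squarefreeness of X^m - 1
  have hsep : ((X : F[X]) ^ m - 1).Separable := by
    have hm' : ((m : F)) ≠ 0 := by
      rw [Ne, CharP.cast_eq_zero_iff F p m]
      exact hm
    simpa using Polynomial.separable_X_pow_sub_C (1 : F) hm' one_ne_zero
  have hsq : Squarefree ((X : F[X]) ^ m - 1) := hsep.squarefree
  -- write X^m - 1 = h * s with h ∤ s
  obtain ⟨s, hs⟩ := id hdvd
  have hhns : ¬ h ∣ s := by
    intro hc
    obtain ⟨t, ht⟩ := hc
    have : h * h ∣ (X : F[X]) ^ m - 1 := ⟨t, by rw [hs, ht, mul_assoc]⟩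
    exact hirr.not_isUnit (hsq h this)
  -- the subgroup M = range of h-action
  set M := (actHom p (F := F) (E := E) h).range with hM
  -- factorization X^N - 1 = h * v₀
  set v₀ : F[X] := h ^ (p ^ a - 1) * s ^ (p ^ a) with hv₀
  have hpa1 : 1 ≤ p ^ a := Nat.one_le_pow _ _ (Nat.Prime.pos Fact.out)
  have hhv₀ : h * v₀ = (X : F[X]) ^ N - 1 := by
    rw [hv₀, ← mul_assoc, ← pow_succ', Nat.sub_add_cancel hpa1, ← mul_pow, ← hs, hXN]
  have hker := ker_eq_range p N hcard hN0 h v₀ hhv₀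
  -- counting : Nat.card (E ⧸ M) = Q ^ deg h
  have hcount : (Nat.card (E ⧸ M) : ℂ) = (Q : ℂ) ^ h.natDegree := by
    have h1 := AddSubgroup.card_eq_card_quotient_mul_card_addSubgroup M
    have h2 := card_ker_mul_card_range (actHom p (F := F) (E := E) h)
    rw [hker.2] at h2
    rw [Nat.card_eq_fintype_card (α := E)] at h1
    have hMpos : 0 < Nat.card M := Nat.card_pos
    have h2' : Q ^ h.natDegree * Nat.card M = Fintype.card E := h2
    have h3 : Nat.card (E ⧸ M) * Nat.card M = Q ^ h.natDegree * Nat.card M := by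
      rw [← h1, h2']
    have : Nat.card (E ⧸ M) = Q ^ h.natDegree := Nat.eq_of_mul_eq_mul_right hMpos h3
    rw [this]
    push_cast
    ring
  -- the character sum
  have hΓ' : Γ = {χ : AddChar E ℂ | ∀ y ∈ M, χ y = 1} := by
    rw [hΓ]
    ext χ
    simp only [Set.mem_setOf_eq, hM]
    constructor
    · rintro hχ y ⟨z, rfl⟩
      rw [actHom_apply]
      exact hχ z
    · intro hχ z
      rw [← actHom_apply p]
      exact hχ _ ⟨z, rfl⟩
  have hsum : ∑ᶠ χ ∈ Γ, (χ w : ℂ) = if w ∈ M then (Q : ℂ) ^ h.natDegree else 0 := by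
    rw [hΓ', finsum_gamma, hcount]
    split_ifs <;> rfl
  -- the main equivalence : w ∉ M ↔ the divisibility condition
  have hequiv : (¬ w ∈ M) ↔
      (∀ g : F[X], g ≠ 0 → polyAct (Fintype.card F) g w = 0 → h ^ p ^ a ∣ g) := by
    constructor
    · intro hw g hg0 hgw
      by_contra hnd
      apply hw
      -- u = gcd g (X^N - 1)
      set u := EuclideanDomain.gcd g ((X : F[X]) ^ N - 1) with hu
      have hu0 : u ≠ 0 := by
        rw [hu, Ne, EuclideanDomain.gcd_eq_zero_iff]
        tauto
      obtain ⟨v, hv⟩ := EuclideanDomain.gcd_dvd_right g ((X : F[X]) ^ N - 1)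
      have huv : u * v = (X : F[X]) ^ N - 1 := hv.symm
      have hug : u ∣ g := EuclideanDomain.gcd_dvd_left _ _
      -- h ∣ v
      have hhv : h ∣ v := by
        by_contra hc
        have hcop : IsCoprime (h ^ p ^ a) v :=
          ((hirr.coprime_iff_not_dvd).mpr hc).pow_left
        have hduv : h ^ p ^ a ∣ u * v := by
          rw [huv, ← hXN]
          exact pow_dvd_pow_of_dvd hdvd _
        exact hnd ((hcop.dvd_of_dvd_mul_right hduv).trans hug)
      -- u annihilates w
      have huw : polyAct Q u w = 0 := by
        have hb := EuclideanDomain.gcd_eq_gcd_ab g ((X : F[X]) ^ N - 1)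
        rw [← hu] at hb
        have hb2 : EuclideanDomain.gcdA g ((X : F[X]) ^ N - 1) * g
            + EuclideanDomain.gcdB g ((X : F[X]) ^ N - 1) * ((X : F[X]) ^ N - 1) = u := by
          rw [hb]; ring
        have h1 : polyAct Q u w
            = polyAct Q (EuclideanDomain.gcdA g ((X : F[X]) ^ N - 1) * g) w
              + polyAct Q (EuclideanDomain.gcdB g ((X : F[X]) ^ N - 1)
                  * ((X : F[X]) ^ N - 1)) w := by
          rw [← hb2, polyAct_eq_aeval p, polyAct_eq_aeval p, polyAct_eq_aeval p,
            map_add, LinearMap.add_apply]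
        rw [h1, polyAct_mul p, polyAct_mul p, hgw, polyAct_zero_right p,
          polyAct_XN_sub_one p N hcard, polyAct_zero_right p, add_zero]
      -- hence w ∈ range of v-action ⊆ M
      have hker2 := ker_eq_range p N hcard hN0 u v huv
      have hwk : w ∈ (actHom p (F := F) (E := E) u).ker := by
        rw [AddMonoidHom.mem_ker, actHom_apply]
        exact huw
      rw [hker2.1] at hwk
      obtain ⟨z, hz⟩ := hwk
      obtain ⟨v', hv'⟩ := hhv
      refine ⟨polyAct Q v' z, ?_⟩
      rw [actHom_apply, ← polyAct_mul p, ← hv']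
      rw [← actHom_apply p]
      exact hz
    · rintro hcond ⟨z, rfl⟩
      have hv₀0 : v₀ ≠ 0 := by
        rw [hv₀]
        exact mul_ne_zero (pow_ne_zero _ hh0)
          (pow_ne_zero _ (fun hc => hhns (by rw [hc]; exact dvd_zero h)))
      have hann : polyAct Q v₀ (actHom p (F := F) (E := E) h z) = 0 := by
        rw [actHom_apply, ← polyAct_mul p, mul_comm v₀ h, hhv₀, polyAct_XN_sub_one p N hcard]
      have hdd := hcond v₀ hv₀0 hann
      -- h^(p^a) ∣ v₀ = h^(p^a - 1) * s^(p^a) is impossible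
      have hcop : IsCoprime (h ^ p ^ a) (s ^ p ^ a) :=
        ((hirr.coprime_iff_not_dvd).mpr hhns).pow
      have : h ^ p ^ a ∣ h ^ (p ^ a - 1) :=
        hcop.dvd_of_dvd_mul_right (by rwa [hv₀] at hdd)
      have := (pow_dvd_pow_iff hh0 hirr.not_isUnit).mp this
      omega
  -- final computation
  have hQC : ((Q : ℂ)) ^ h.natDegree ≠ 0 :=
    pow_ne_zero _ (Nat.cast_ne_zero.mpr (Nat.one_le_iff_ne_zero.mp hQ1))
  by_cases hw : w ∈ M
  · rw [hsum, if_pos hw, sub_self, mul_zero, if_neg (fun hc => (hequiv.mpr hc) hw)]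
  · rw [hsum, if_neg hw, sub_zero, inv_mul_cancel₀ hQC, if_pos (hequiv.mp hw)]

end
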